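/- Let 0 < τ_1 ≤ ... ≤ τ_n, S > 0, and let t = 4 min_{j∈[n]} (∑_{i=1}^j 1/τ_i)^{-1} (S + j). Then ∑_{i=1}^n ⌊t/(2τ_i)⌋ ≥ S, i.e., in t seconds n parallel workers where worker i needs at most 2τ_i seconds per task complete at least S tasks. -/
import Mathlib


theorem compute_batch_difference_time (n : ℕ) (hn : 1 ≤ n) (τ : ℕ → ℝ)
    (hpos : ∀ i ∈ Finset.Icc 1 n, 0 < τ i)
    (hmono : ∀ i j, 1 ≤ i → i ≤ j → j ≤ n → τ i ≤ τ j)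
    (S : ℝ) (hS : 0 < S)
    (t : ℝ)
    (ht : t = 4 * (Finset.Icc 1 n).inf' (Finset.nonempty_Icc.mpr hn)
        (fun j => (S + j) / ∑ i ∈ Finset.Icc 1 j, 1 / τ i)) :
    S ≤ ∑ i ∈ Finset.Icc 1 n, (⌊t / (2 * τ i)⌋₊ : ℝ) := by
  obtain ⟨j, hjmem, hjeq⟩ := Finset.exists_mem_eq_inf' (Finset.nonempty_Icc.mpr hn)
    (fun j => (S + j) / ∑ i ∈ Finset.Icc 1 j, 1 / τ i)
  rw [Finset.mem_Icc] at hjmem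
  have hH : 0 < ∑ i ∈ Finset.Icc 1 j, 1 / τ i := by
    apply Finset.sum_pos
    · intro i hi
      rw [Finset.mem_Icc] at hi
      exact one_div_pos.mpr (hpos i (Finset.mem_Icc.mpr ⟨hi.1, hi.2.trans hjmem.2⟩))
    · exact Finset.nonempty_Icc.mpr hjmem.1
  have ht' : t = 4 * ((S + j) / ∑ i ∈ Finset.Icc 1 j, 1 / τ i) := by
    rw [ht, hjeq]
  have h1 : ∑ i ∈ Finset.Icc 1 j, (t / (2 * τ i) - 1)
      < ∑ i ∈ Finset.Icc 1 j, (⌊t / (2 * τ i)⌋₊ : ℝ) :=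
    Finset.sum_lt_sum_of_nonempty (Finset.nonempty_Icc.mpr hjmem.1)
      (fun i _ => Nat.sub_one_lt_floor _)
  have h2 : ∑ i ∈ Finset.Icc 1 j, (t / (2 * τ i) - 1)
      = (t / 2) * (∑ i ∈ Finset.Icc 1 j, 1 / τ i) - j := by
    rw [Finset.sum_sub_distrib, Finset.mul_sum]
    congr 1
    · exact Finset.sum_congr rfl (fun i _ => by rw [mul_one_div, div_div])
    · simp [Nat.card_Icc]
  have h3 : (t / 2) * (∑ i ∈ Finset.Icc 1 j, 1 / τ i) = 2 * (S + j) := by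
    rw [ht']
    field_simp
    ring
  have h4 : ∑ i ∈ Finset.Icc 1 j, (⌊t / (2 * τ i)⌋₊ : ℝ)
      ≤ ∑ i ∈ Finset.Icc 1 n, (⌊t / (2 * τ i)⌋₊ : ℝ) :=
    Finset.sum_le_sum_of_subset_of_nonneg (Finset.Icc_subset_Icc_right hjmem.2)
      (fun i _ _ => Nat.cast_nonneg _)
  have hj1 : (1 : ℝ) ≤ j := by exact_mod_cast hjmem.1
  linarith
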